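/- Let G = (V,E) be a finite simple graph whose chromatic polynomial is χ_G. Then the coefficient of the linear term of χ_G, up to the standard sign (−1)^{|V|−1}, equals the number of acyclic orientations of G with a unique fixed source; in particular, it is zero when G is disconnected and has at least two vertices, and equals 1 when G has a single vertex. -/

import Mathlib

open SimpleGraph Polynomial

/-- Number of proper colorings of `G` with `k` colors. -/
noncomputable def properColoringCount {V : Type*} (G : SimpleGraph V) (k : ℕ) : ℕ :=
  Nat.card {f : V → Fin k // ∀ u v, G.Adj u v → f u ≠ f v}

/-- `P` is the chromatic polynomial of `G`. -/
def IsChromaticPoly {V : Type*} (G : SimpleGraph V) (P : Polynomial ℤ) : Prop :=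
  ∀ k : ℕ, P.eval (k : ℤ) = properColoringCount G k

/-- `r` is an orientation of the simple graph `G`: every directed edge lies over an
edge of `G`, and every edge of `G` gets exactly one of its two directions. -/
def IsOrientation {V : Type*} (G : SimpleGraph V) (r : V → V → Prop) : Prop :=
  (∀ u v, r u v → G.Adj u v) ∧ (∀ u v, G.Adj u v → (r u v ↔ ¬ r v u))

/-- A directed relation is acyclic if it has no directed cycles. -/
def IsAcyclicRel {V : Type*} (r : V → V → Prop) : Prop :=
  ∀ v, ¬ Relation.TransGen r v v

/-- The number of acyclic orientations of `G`. -/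
noncomputable def acyclicOrientationCount {V : Type*} (G : SimpleGraph V) : ℕ :=
  Nat.card {r : V → V → Prop // IsOrientation G r ∧ IsAcyclicRel r}


section GZProof
open Relation
open scoped Classical

section Infra
open Classical
variable {V : Type*}

/-- uniqueness of chromatic polynomial -/
lemma chromPoly_unique {G : SimpleGraph V} {P Q : Polynomial ℤ}
    (hP : IsChromaticPoly G P) (hQ : IsChromaticPoly G Q) : P = Q := by
  have h : P - Q = 0 := by
    apply Polynomial.eq_zero_of_infinite_isRoot
    apply Set.infinite_of_injective_forall_mem (f := fun k : ℕ => (k : ℤ))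
    · intro a b hab; simpa using hab
    · intro k
      simp only [Set.mem_setOf_eq, Polynomial.IsRoot, Polynomial.eval_sub]
      rw [hP k, hQ k, sub_self]
  have := sub_eq_zero.mp h
  exact this

lemma count_bot [Fintype V] (k : ℕ) :
    properColoringCount (⊥ : SimpleGraph V) k = k ^ Fintype.card V := by
  rw [properColoringCount]
  have e : {f : V → Fin k // ∀ u v, (⊥ : SimpleGraph V).Adj u v → f u ≠ f v} ≃ (V → Fin k) :=
    { toFun := fun f => f.1, invFun := fun f => ⟨f, by simp⟩,
      left_inv := fun f => rfl, right_inv := fun f => rfl }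
  rw [Nat.card_congr e, Nat.card_fun, Nat.card_eq_fintype_card, Nat.card_eq_fintype_card,
    Fintype.card_fin]
end Infra

section Con
variable {V : Type*} (G : SimpleGraph V) (x y : V)

/-- contraction of the edge `xy`, as a graph on `{z // z ≠ y}`: `y` is merged into `x`. -/
def conGraph : SimpleGraph {z : V // z ≠ y} where
  Adj a b := (G.Adj a.1 b.1 ∨ (a.1 = x ∧ G.Adj y b.1) ∨ (b.1 = x ∧ G.Adj a.1 y)) ∧ a ≠ b
  symm := by
    constructor
    rintro a b ⟨h, hne⟩
    refine ⟨?_, hne.symm⟩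
    rcases h with h | ⟨h1, h2⟩ | ⟨h1, h2⟩
    · exact Or.inl h.symm
    · exact Or.inr (Or.inr ⟨h1, h2.symm⟩)
    · exact Or.inr (Or.inl ⟨h1, h2.symm⟩)
  loopless := by constructor; rintro a ⟨-, hne⟩; exact hne rfl

variable {G x y}

lemma adj_del' (hxy : G.Adj x y) {u v : V} :
    (G.deleteEdges {s(x,y)}).Adj u v ↔ G.Adj u v ∧ ¬(u = x ∧ v = y) ∧ ¬(u = y ∧ v = x) := by
  rw [SimpleGraph.deleteEdges_adj]
  simp only [Set.mem_singleton_iff, Sym2.eq_iff]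
  tauto

/-- the projection `V → {z // z ≠ y}` sending `y` to `x`. -/
noncomputable def conProj (hxy : x ≠ y) (z : V) : {z : V // z ≠ y} :=
  if h : z = y then ⟨x, hxy⟩ else ⟨z, h⟩

lemma conProj_val (hxy : x ≠ y) (a : {z : V // z ≠ y}) : conProj hxy a.1 = a := by
  simp [conProj, a.2]

lemma conProj_y (hxy : x ≠ y) : conProj hxy y = ⟨x, hxy⟩ := by simp [conProj]

lemma conProj_x (hxy : x ≠ y) : conProj hxy x = ⟨x, hxy⟩ := by simp [conProj, hxy]

lemma conProj_of_ne (hxy : x ≠ y) {z : V} (hz : z ≠ y) : conProj hxy z = ⟨z, hz⟩ :=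
  dif_neg hz

lemma adj_con (hxy : G.Adj x y) {u v : V} (h : (G.deleteEdges {s(x,y)}).Adj u v) :
    (conGraph G x y).Adj (conProj hxy.ne u) (conProj hxy.ne v) := by
  obtain ⟨hadj, h1, h2⟩ := (adj_del' hxy).1 h
  have hne : x ≠ y := hxy.ne
  by_cases hu : u = y <;> by_cases hv : v = y
  · exact absurd (hu.trans hv.symm) hadj.ne
  · rw [hu, conProj_y, conProj_of_ne hne hv]
    have hvx : v ≠ x := fun hvx => h2 ⟨hu, hvx⟩
    exact ⟨Or.inr (Or.inl ⟨rfl, hu ▸ hadj⟩), fun hh => hvx (congrArg Subtype.val hh).symm⟩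
  · rw [hv, conProj_y, conProj_of_ne hne hu]
    have hux : u ≠ x := fun hux => h1 ⟨hux, hv⟩
    exact ⟨Or.inr (Or.inr ⟨rfl, hv ▸ hadj⟩), fun hh => hux (congrArg Subtype.val hh)⟩
  · rw [conProj_of_ne hne hu, conProj_of_ne hne hv]
    exact ⟨Or.inl hadj, fun hh => hadj.ne (congrArg Subtype.val hh)⟩

lemma count_del [Fintype V] (hxy : G.Adj x y) (k : ℕ) :
    properColoringCount (G.deleteEdges {s(x,y)}) k =
      properColoringCount G k + properColoringCount (conGraph G x y) k := by
  have hne : x ≠ y := hxy.ne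
  set Gd := G.deleteEdges {s(x,y)} with hGd
  have e : {f : V → Fin k // ∀ u v, Gd.Adj u v → f u ≠ f v} ≃
      ({f : V → Fin k // ∀ u v, G.Adj u v → f u ≠ f v} ⊕
       {g : {z : V // z ≠ y} → Fin k // ∀ u v, (conGraph G x y).Adj u v → g u ≠ g v}) := by
    refine
    { toFun := fun f => if h : f.1 x = f.1 y then Sum.inr ⟨fun a => f.1 a.1, ?_⟩
        else Sum.inl ⟨f.1, ?_⟩
      invFun := Sum.elim (fun f => ⟨f.1, ?_⟩) (fun g => ⟨fun z => g.1 (conProj hne z), ?_⟩)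
      left_inv := ?_
      right_inv := ?_ }
    · -- contraction coloring proper
      rintro a b ⟨hadj | ⟨h1, h2⟩ | ⟨h1, h2⟩, hab⟩
      · refine f.2 a.1 b.1 ((adj_del' hxy).2 ⟨hadj, ?_, ?_⟩)
        · rintro ⟨-, hh⟩; exact b.2 hh
        · rintro ⟨hh, -⟩; exact a.2 hh
      · have hb : Gd.Adj y b.1 := (adj_del' hxy).2 ⟨h2, by rintro ⟨hh,-⟩; exact hne hh.symm,
          by rintro ⟨-, hh⟩; exact hab (Subtype.ext (h1.trans hh.symm))⟩
        show f.1 a.1 ≠ f.1 b.1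
        rw [h1, h]; exact f.2 y b.1 hb
      · have ha : Gd.Adj a.1 y := (adj_del' hxy).2 ⟨h2,
          by rintro ⟨hh, -⟩; exact hab (Subtype.ext (hh.trans h1.symm)),
          by rintro ⟨hh, -⟩; exact a.2 hh⟩
        show f.1 a.1 ≠ f.1 b.1
        rw [h1, h]; exact f.2 a.1 y ha
    · -- f proper for G, f x ≠ f y case
      intro u v huv
      rcases eq_or_ne (s(u,v)) (s(x,y)) with hs | hs
      · rcases Sym2.eq_iff.1 hs with ⟨rfl, rfl⟩ | ⟨rfl, rfl⟩
        · exact h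
        · exact fun hh => h hh.symm
      · refine f.2 u v ((adj_del' hxy).2 ⟨huv, ?_, ?_⟩)
        · rintro ⟨rfl, rfl⟩; exact hs rfl
        · rintro ⟨rfl, rfl⟩; exact hs (Sym2.eq_swap)
    · -- G-proper coloring is Gd-proper
      exact fun u v huv => f.2 u v ((adj_del' hxy).1 huv).1
    · -- contraction coloring pulled back is Gd-proper
      exact fun u v huv => g.2 _ _ (adj_con hxy huv)
    · -- left inverse
      rintro ⟨f, hf⟩
      by_cases h : f x = f y
      · simp only [h, dif_pos, Sum.elim_inr]
        apply Subtype.ext; funext z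
        show f (conProj hne z).1 = f z
        by_cases hz : z = y
        · subst hz; rw [conProj_y]; exact h
        · rw [conProj_of_ne hne hz]
      · simp only [h, dif_neg, not_false_iff, Sum.elim_inl]
    · -- right inverse
      rintro (⟨f, hf⟩ | ⟨g, hg⟩)
      · have h : f x ≠ f y := hf x y hxy
        simp only [Sum.elim_inl, dif_neg h]
        exact dif_neg h
      · have h : g (conProj hne x) = g (conProj hne y) := by rw [conProj_x, conProj_y]
        simp only [Sum.elim_inr, dif_pos h]
        refine (dif_pos h).trans ?_
        congr 1
        apply Subtype.ext; funext a
        show g (conProj hne a.1) = g a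
        rw [conProj_val]
  rw [properColoringCount, Nat.card_congr e, Nat.card_sum]; rfl
end Con

section Exist
universe u

lemma chromPoly_bot (V : Type u) [Fintype V] :
    IsChromaticPoly (⊥ : SimpleGraph V) (X ^ Fintype.card V) := by
  intro k
  rw [eval_pow, eval_X, count_bot]
  push_cast; ring

lemma bot_of_no_edges {V : Type u} [Fintype V] {G : SimpleGraph V}
    (h : Nat.card G.edgeSet = 0) : G = ⊥ := by
  rw [Nat.card_coe_set_eq, Set.ncard_eq_zero (G.edgeSet.toFinite)] at h
  exact SimpleGraph.edgeSet_eq_empty.1 h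

lemma card_con {V : Type u} [Fintype V] (y : V) :
    Nat.card {z : V // z ≠ y} = Fintype.card V - 1 := by
  classical
  rw [Nat.card_eq_fintype_card, Fintype.card_subtype_compl, Fintype.card_subtype_eq]

lemma card_del_lt {V : Type u} [Fintype V] {G : SimpleGraph V} {x y : V} (h : G.Adj x y) :
    Nat.card (G.deleteEdges {s(x,y)}).edgeSet < Nat.card G.edgeSet := by
  rw [Nat.card_coe_set_eq, Nat.card_coe_set_eq, SimpleGraph.edgeSet_deleteEdges]
  exact Set.ncard_diff_singleton_lt_of_mem (G.mem_edgeSet.2 h) (G.edgeSet.toFinite)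

lemma chromPoly_exists' : ∀ (n : ℕ) (V : Type u) [Fintype V] (G : SimpleGraph V),
    Fintype.card V ≤ n → ∃ P, IsChromaticPoly G P := by
  intro n
  induction n with
  | zero =>
    intro V _ G hc
    haveI : IsEmpty V := Fintype.card_eq_zero_iff.1 (Nat.le_zero.1 hc)
    have hG : G = ⊥ := by
      ext u v; exact iff_of_false (fun _ => IsEmpty.false u) (fun h => h.elim)
    exact ⟨X ^ Fintype.card V, hG ▸ chromPoly_bot V⟩
  | succ n ihn =>
    suffices h : ∀ (m : ℕ) (V : Type u) [Fintype V] (G : SimpleGraph V),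
        Fintype.card V ≤ n + 1 → Nat.card G.edgeSet ≤ m → ∃ P, IsChromaticPoly G P by
      intro V _ G hc
      exact h (Nat.card G.edgeSet) V G hc le_rfl
    intro m
    induction m with
    | zero =>
      intro V _ G _ hm
      have hG : G = ⊥ := bot_of_no_edges (Nat.le_zero.1 hm)
      exact ⟨X ^ Fintype.card V, hG ▸ chromPoly_bot V⟩
    | succ m ihm =>
      intro V _ G hc hm
      by_cases hb : Nat.card G.edgeSet = 0
      · exact ⟨X ^ Fintype.card V, (bot_of_no_edges hb) ▸ chromPoly_bot V⟩
      · have hne : G.edgeSet.Nonempty := by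
          rw [Set.nonempty_iff_ne_empty]
          intro hh
          exact hb (by rw [Nat.card_coe_set_eq, hh, Set.ncard_empty])
        obtain ⟨e, he⟩ := hne
        obtain ⟨x, y, rfl⟩ := Sym2.exists.1 ⟨e, rfl⟩
        have hxy : G.Adj x y := G.mem_edgeSet.1 he
        have hdel : Nat.card (G.deleteEdges {s(x,y)}).edgeSet ≤ m :=
          Nat.lt_succ_iff.1 (lt_of_lt_of_le (card_del_lt hxy) hm)
        obtain ⟨Pd, hPd⟩ := ihm V (G.deleteEdges {s(x,y)}) hc hdel
        haveI : Fintype {z : V // z ≠ y} := Fintype.ofFinite _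
        have hcc : Fintype.card {z : V // z ≠ y} ≤ n := by
          have h1 : Nat.card {z : V // z ≠ y} = Fintype.card V - 1 := card_con y
          rw [Nat.card_eq_fintype_card] at h1
          omega
        obtain ⟨Pc, hPc⟩ := ihn {z : V // z ≠ y} (conGraph G x y) hcc
        refine ⟨Pd - Pc, fun k => ?_⟩
        have hdc := count_del hxy k
        rw [eval_sub, hPd k, hPc k]
        rw [hdc]
        push_cast; ring
end Exist

section Ori
variable {V : Type*} {G : SimpleGraph V} {x y : V}

/-! ### directed relations: deletion, extension, quotient, lift -/

def delRel (x y : V) (r : V → V → Prop) : V → V → Prop :=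
  fun u v => r u v ∧ ¬(u = x ∧ v = y) ∧ ¬(u = y ∧ v = x)

def insRel (x y : V) (d : V → V → Prop) : V → V → Prop :=
  fun u v => d u v ∨ (u = x ∧ v = y)

def barRel (x y : V) (d : V → V → Prop) : {z : V // z ≠ y} → {z : V // z ≠ y} → Prop :=
  fun a b => d a.1 b.1 ∨ (a.1 = x ∧ d y b.1) ∨ (b.1 = x ∧ d a.1 y)

def liftRel (hxy : x ≠ y) (G : SimpleGraph V) (o : {z : V // z ≠ y} → {z : V // z ≠ y} → Prop) :
    V → V → Prop :=
  fun u v => o (conProj hxy u) (conProj hxy v) ∧ (G.deleteEdges {s(x,y)}).Adj u v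

lemma transGen_le {r d : V → V → Prop} (h : ∀ u v, r u v → Relation.TransGen d u v)
    {a b : V} (hab : Relation.TransGen r a b) : Relation.TransGen d a b := by
  induction hab with
  | single h1 => exact h _ _ h1
  | tail _ h2 ih => exact ih.trans (h _ _ h2)

lemma ori_irrefl {r : V → V → Prop} (hr : IsOrientation G r) (u : V) : ¬ r u u :=
  fun h => G.loopless.irrefl u (hr.1 u u h)

lemma ori_asymm {r : V → V → Prop} (hr : IsOrientation G r) {u v : V} (h1 : r u v) :
    ¬ r v u := by
  have hadj := hr.1 u v h1
  exact (hr.2 u v hadj).1 h1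

lemma ori_total {r : V → V → Prop} (hr : IsOrientation G r) {u v : V} (h : G.Adj u v) :
    r u v ∨ r v u := by
  by_cases h1 : r u v
  · exact Or.inl h1
  · exact Or.inr ((hr.2 v u h.symm).2 h1)

lemma ori_del (hxy : G.Adj x y) {r : V → V → Prop} (hr : IsOrientation G r) :
    IsOrientation (G.deleteEdges {s(x,y)}) (delRel x y r) := by
  constructor
  · rintro u v ⟨h1, h2, h3⟩
    exact (adj_del' hxy).2 ⟨hr.1 u v h1, h2, h3⟩
  · intro u v hadj
    obtain ⟨hadj', h2, h3⟩ := (adj_del' hxy).1 hadj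
    constructor
    · rintro ⟨h1, -, -⟩ ⟨h1', -, -⟩
      exact ori_asymm hr h1 h1'
    · intro h
      refine ⟨?_, h2, h3⟩
      by_contra h1
      exact h ⟨(hr.2 v u hadj'.symm).2 (fun hh => h1 hh), fun hh => h3 ⟨hh.2, hh.1⟩,
        fun hh => h2 ⟨hh.2, hh.1⟩⟩
    
lemma acyc_del {r : V → V → Prop} (hr : IsAcyclicRel r) : IsAcyclicRel (delRel x y r) :=
  fun v h => hr v (transGen_le (fun _ _ hh => Relation.TransGen.single hh.1) h)

lemma del_no_e (hxy : G.Adj x y) {d : V → V → Prop}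
    (hd : IsOrientation (G.deleteEdges {s(x,y)}) d) : ¬ d x y ∧ ¬ d y x := by
  constructor
  · intro h
    exact ((adj_del' hxy).1 (hd.1 x y h)).2.1 ⟨rfl, rfl⟩
  · intro h
    exact ((adj_del' hxy).1 (hd.1 y x h)).2.2 ⟨rfl, rfl⟩

lemma ori_ins (hxy : G.Adj x y) {d : V → V → Prop}
    (hd : IsOrientation (G.deleteEdges {s(x,y)}) d) : IsOrientation G (insRel x y d) := by
  have hno := del_no_e hxy hd
  constructor
  · rintro u v (h | ⟨rfl, rfl⟩)
    · exact ((adj_del' hxy).1 (hd.1 u v h)).1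
    · exact hxy
  · intro u v hadj
    by_cases hs : s(u,v) = s(x,y)
    · rcases Sym2.eq_iff.1 hs with ⟨rfl, rfl⟩ | ⟨rfl, rfl⟩
      · constructor
        · rintro - (h | ⟨rfl, -⟩)
          · exact hno.2 h
          · exact hxy.ne rfl
        · intro _; exact Or.inr ⟨rfl, rfl⟩
      · constructor
        · rintro (h | ⟨rfl, -⟩)
          · exact absurd h hno.2
          · exact absurd rfl hxy.ne
        · intro h; exact absurd (Or.inr ⟨rfl, rfl⟩) h
    · have hadj' : (G.deleteEdges {s(x,y)}).Adj u v := by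
        rw [SimpleGraph.deleteEdges_adj]
        exact ⟨hadj, by simpa using hs⟩
      have hne1 : ¬(u = x ∧ v = y) := fun ⟨h1, h2⟩ => hs (by rw [h1, h2])
      have hne2 : ¬(v = x ∧ u = y) := fun ⟨h1, h2⟩ => hs (by rw [h1, h2, Sym2.eq_swap])
      constructor
      · rintro (h | hh) (h' | hh')
        · exact ori_asymm hd h h'
        · exact hne2 hh'
        · exact hne1 hh
        · exact hne1 hh
      · intro h
        have : ¬ d v u := fun hh => h (Or.inl hh)
        exact Or.inl ((hd.2 u v hadj').2 (fun hh => this hh))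
end Ori

section Ori2
variable {V : Type*} {G : SimpleGraph V} {x y : V}

def isSrc (r : V → V → Prop) (s : V) : Prop := ∀ u, ¬ r u s

lemma acyc_ins (hxy : x ≠ y) {d : V → V → Prop} (hd : IsAcyclicRel d)
    (hnp : ¬ Relation.TransGen d y x) : IsAcyclicRel (insRel x y d) := by
  intro v hv
  have key : ∀ a b, Relation.TransGen (insRel x y d) a b →
      Relation.TransGen d a b ∨ (Relation.ReflTransGen d a x ∧ Relation.ReflTransGen d y b) := by
    intro a b hab
    induction hab with
    | single h =>
      rcases h with h | ⟨rfl, rfl⟩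
      · exact Or.inl (Relation.TransGen.single h)
      · exact Or.inr ⟨Relation.ReflTransGen.refl, Relation.ReflTransGen.refl⟩
    | tail hab h ih =>
      rcases h with h | ⟨rfl, rfl⟩
      · rcases ih with ih | ⟨h1, h2⟩
        · exact Or.inl (ih.tail h)
        · exact Or.inr ⟨h1, h2.tail h⟩
      · rcases ih with ih | ⟨h1, h2⟩
        · exact Or.inr ⟨ih.to_reflTransGen, Relation.ReflTransGen.refl⟩
        · rcases (Relation.reflTransGen_iff_eq_or_transGen.1 h2) with h2' | h2'
          · exact absurd h2' hxy
          · exact absurd h2' hnp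
  rcases key v v hv with h | ⟨h1, h2⟩
  · exact hd v h
  · rcases Relation.reflTransGen_iff_eq_or_transGen.1 (h2.trans h1) with h' | h'
    · exact hxy h'
    · exact hnp h'

lemma del_ins (hxy : G.Adj x y) {d : V → V → Prop}
    (hd : IsOrientation (G.deleteEdges {s(x,y)}) d) : delRel x y (insRel x y d) = d := by
  have hno := del_no_e hxy hd
  funext u v
  apply propext
  constructor
  · rintro ⟨h | ⟨rfl, rfl⟩, h2, h3⟩
    · exact h
    · exact absurd ⟨rfl, rfl⟩ h2
  · intro h
    refine ⟨Or.inl h, ?_, ?_⟩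
    · rintro ⟨rfl, rfl⟩; exact hno.1 h
    · rintro ⟨rfl, rfl⟩; exact hno.2 h

lemma ori_ext_unique (hxy : G.Adj x y) {r₁ r₂ : V → V → Prop}
    (h1 : IsOrientation G r₁) (h2 : IsOrientation G r₂)
    (hdel : delRel x y r₁ = delRel x y r₂) (hxyeq : r₁ x y ↔ r₂ x y) : r₁ = r₂ := by
  funext u v
  apply propext
  by_cases hs : s(u,v) = s(x,y)
  · rcases Sym2.eq_iff.1 hs with ⟨rfl, rfl⟩ | ⟨rfl, rfl⟩
    · exact hxyeq
    · rw [h1.2 u v hxy.symm, h2.2 u v hxy.symm]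
      exact not_congr hxyeq
  · have hne1 : ¬(u = x ∧ v = y) := fun ⟨a, b⟩ => hs (by rw [a, b])
    have hne2 : ¬(u = y ∧ v = x) := fun ⟨a, b⟩ => hs (by rw [a, b, Sym2.eq_swap])
    have e1 : r₁ u v ↔ delRel x y r₁ u v := ⟨fun h => ⟨h, hne1, hne2⟩, fun h => h.1⟩
    have e2 : r₂ u v ↔ delRel x y r₂ u v := ⟨fun h => ⟨h, hne1, hne2⟩, fun h => h.1⟩
    rw [e1, e2, hdel]

lemma src_del_of_src {r : V → V → Prop} {s : V} (h : isSrc r s) : isSrc (delRel x y r) s :=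
  fun u hh => h u hh.1

lemma src_of_src_del (hr : IsOrientation G r) (hrxy : r x y) {s : V} (hs : s ≠ y)
    (h : isSrc (delRel x y r) s) : isSrc r s := by
  intro u hu
  refine h u ⟨hu, ?_, ?_⟩
  · rintro ⟨-, rfl⟩; exact hs rfl
  · rintro ⟨rfl, rfl⟩; exact ori_asymm hr hrxy hu

lemma src_ins_iff {d : V → V → Prop} {s : V} (hs : s ≠ y) :
    isSrc (insRel x y d) s ↔ isSrc d s := by
  constructor
  · exact fun h u hu => h u (Or.inl hu)
  · rintro h u (hu | ⟨rfl, rfl⟩)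
    · exact h u hu
    · exact hs rfl

lemma not_src_ins_y : ¬ isSrc (insRel x y d) y := fun h => h x (Or.inr ⟨rfl, rfl⟩)

lemma delRel_comm (x y : V) (r : V → V → Prop) : delRel x y r = delRel y x r := by
  funext u v; apply propext; unfold delRel; tauto

lemma deleteEdges_comm' (G : SimpleGraph V) (x y : V) :
    G.deleteEdges {s(x,y)} = G.deleteEdges {s(y,x)} := by
  rw [Sym2.eq_swap]
end Ori2

section Ori3
variable {V : Type*} {G : SimpleGraph V} {x y : V}

lemma bar_proj (hxy : G.Adj x y) {d : V → V → Prop}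
    (hd : IsOrientation (G.deleteEdges {s(x,y)}) d) {u v : V} (h : d u v) :
    barRel x y d (conProj hxy.ne u) (conProj hxy.ne v) := by
  have hadj := hd.1 u v h
  have huv : u ≠ v := hadj.ne
  by_cases hu : u = y
  · have hv : v ≠ y := fun hh => huv (hu.trans hh.symm)
    rw [hu, conProj_y, conProj_of_ne hxy.ne hv]
    exact Or.inr (Or.inl ⟨rfl, hu ▸ h⟩)
  · rw [conProj_of_ne hxy.ne hu]
    by_cases hv : v = y
    · rw [hv, conProj_y]
      exact Or.inr (Or.inr ⟨rfl, hv ▸ h⟩)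
    · rw [conProj_of_ne hxy.ne hv]
      exact Or.inl h

lemma bar_elim {d : V → V → Prop} {a b : {z : V // z ≠ y}} (h : barRel x y d a b) :
    ∃ p q, d p q ∧ (p = a.1 ∨ (a.1 = x ∧ p = y)) ∧ (q = b.1 ∨ (b.1 = x ∧ q = y)) := by
  rcases h with h | ⟨h1, h2⟩ | ⟨h1, h2⟩
  · exact ⟨a.1, b.1, h, Or.inl rfl, Or.inl rfl⟩
  · exact ⟨y, b.1, h2, Or.inr ⟨h1, rfl⟩, Or.inl rfl⟩
  · exact ⟨a.1, y, h2, Or.inl rfl, Or.inr ⟨h1, rfl⟩⟩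

lemma mem_cls_eq {a : {z : V // z ≠ y}} {p q : V}
    (hp : p = a.1 ∨ (a.1 = x ∧ p = y)) (hq : q = a.1 ∨ (a.1 = x ∧ q = y)) (hpq : p ≠ q) :
    a.1 = x ∧ ((p = x ∧ q = y) ∨ (p = y ∧ q = x)) := by
  rcases hp with rfl | ⟨h1, rfl⟩ <;> rcases hq with rfl | ⟨h2, rfl⟩
  · exact absurd rfl hpq
  · exact ⟨h2, Or.inl ⟨h2, rfl⟩⟩
  · exact ⟨h1, Or.inr ⟨rfl, h1⟩⟩
  · exact absurd rfl hpq

lemma bar_not_both (hne : x ≠ y) {d : V → V → Prop} (hac : IsAcyclicRel d)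
    (np1 : ¬ Relation.TransGen d x y) (np2 : ¬ Relation.TransGen d y x)
    {a b : {z : V // z ≠ y}} (hab : a ≠ b) :
    ¬ (barRel x y d a b ∧ barRel x y d b a) := by
  rintro ⟨h1, h2⟩
  obtain ⟨p, q, hpq, hp, hq⟩ := bar_elim h1
  obtain ⟨p', q', hp'q', hp', hq'⟩ := bar_elim h2
  by_cases hqp : q = p'
  · subst hqp
    by_cases hpq' : p = q'
    · subst hpq'
      exact hac p ((Relation.TransGen.single hpq).tail hp'q')
    · obtain ⟨-, hc⟩ := mem_cls_eq hp hq' hpq'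
      have ht : Relation.TransGen d p q' := (Relation.TransGen.single hpq).tail hp'q'
      rcases hc with ⟨rfl, rfl⟩ | ⟨rfl, rfl⟩
      · exact np1 ht
      · exact np2 ht
  · obtain ⟨hbx, hc⟩ := mem_cls_eq hq hp' hqp
    by_cases hpq' : p = q'
    · subst hpq'
      have ht : Relation.TransGen d p' q := (Relation.TransGen.single hp'q').tail hpq
      rcases hc with ⟨rfl, rfl⟩ | ⟨rfl, rfl⟩
      · exact np2 ht
      · exact np1 ht
    · obtain ⟨hax, -⟩ := mem_cls_eq hp hq' hpq'
      exact hab (Subtype.ext (hax.trans hbx.symm))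

lemma ori_bar (hxy : G.Adj x y) {d : V → V → Prop}
    (hd : IsOrientation (G.deleteEdges {s(x,y)}) d) (hac : IsAcyclicRel d)
    (np1 : ¬ Relation.TransGen d x y) (np2 : ¬ Relation.TransGen d y x) :
    IsOrientation (conGraph G x y) (barRel x y d) := by
  have hne : x ≠ y := hxy.ne
  constructor
  · intro a b h
    obtain ⟨p, q, hpq, hp, hq⟩ := bar_elim h
    have hadj := adj_con hxy (hd.1 p q hpq)
    have ha : conProj hne p = a := by
      rcases hp with rfl | ⟨h1, rfl⟩
      · exact conProj_val hne a
      · rw [conProj_y]; exact Subtype.ext h1.symm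
    have hb : conProj hne q = b := by
      rcases hq with rfl | ⟨h1, rfl⟩
      · exact conProj_val hne b
      · rw [conProj_y]; exact Subtype.ext h1.symm
    rwa [ha, hb] at hadj
  · intro a b hadj
    have hab : a ≠ b := hadj.ne
    constructor
    · intro h h'
      exact bar_not_both hne hac np1 np2 hab ⟨h, h'⟩
    · intro h
      obtain ⟨hdisj, -⟩ := hadj
      rcases hdisj with hh | ⟨h1, h2⟩ | ⟨h1, h2⟩
      · have hadj' : (G.deleteEdges {s(x,y)}).Adj a.1 b.1 := (adj_del' hxy).2
          ⟨hh, fun hp => b.2 hp.2, fun hp => a.2 hp.1⟩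
        rcases ori_total hd hadj' with ht | ht
        · exact Or.inl ht
        · exact absurd (Or.inl ht) h
      · have hbx : b.1 ≠ x := fun hh => hab (Subtype.ext (h1.trans hh.symm))
        have hadj' : (G.deleteEdges {s(x,y)}).Adj y b.1 := (adj_del' hxy).2
          ⟨h2, fun hp => hne hp.1.symm, fun hp => hbx hp.2⟩
        rcases ori_total hd hadj' with ht | ht
        · exact Or.inr (Or.inl ⟨h1, ht⟩)
        · exact absurd (Or.inr (Or.inr ⟨h1, ht⟩)) h
      · have hax : a.1 ≠ x := fun hh => hab (Subtype.ext (hh.trans h1.symm))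
        have hadj' : (G.deleteEdges {s(x,y)}).Adj a.1 y := (adj_del' hxy).2
          ⟨h2, fun hp => hax hp.1, fun hp => a.2 hp.1⟩
        rcases ori_total hd hadj' with ht | ht
        · exact Or.inr (Or.inr ⟨h1, ht⟩)
        · exact absurd (Or.inr (Or.inl ⟨h1, ht⟩)) h

lemma src_bar_iff (hxy : G.Adj x y) {d : V → V → Prop}
    (hd : IsOrientation (G.deleteEdges {s(x,y)}) d) {t : {z : V // z ≠ y}} (htx : t.1 ≠ x) :
    isSrc (barRel x y d) t ↔ isSrc d t.1 := by
  constructor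
  · intro h u hu
    have := bar_proj hxy hd hu
    rw [conProj_val hxy.ne t] at this
    exact h _ this
  · intro h u hu
    obtain ⟨p, q, hpq, -, hq⟩ := bar_elim hu
    rcases hq with rfl | ⟨h1, -⟩
    · exact h p hpq
    · exact htx h1

lemma src_bar_w (hxy : G.Adj x y) {d : V → V → Prop}
    (hd : IsOrientation (G.deleteEdges {s(x,y)}) d) :
    isSrc (barRel x y d) ⟨x, hxy.ne⟩ ↔ (isSrc d x ∧ isSrc d y) := by
  constructor
  · intro h
    constructor
    · intro u hu
      have := bar_proj hxy hd hu
      rw [conProj_x hxy.ne] at this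
      exact h _ this
    · intro u hu
      have := bar_proj hxy hd hu
      rw [conProj_y hxy.ne] at this
      exact h _ this
  · rintro ⟨h1, h2⟩ u hu
    obtain ⟨p, q, hpq, -, hq⟩ := bar_elim hu
    rcases hq with rfl | ⟨-, rfl⟩
    · exact h1 p hpq
    · exact h2 p hpq

lemma bar_lift_step {d : V → V → Prop} {a b : {z : V // z ≠ y}}
    (h : barRel x y d a b) (ha : a ≠ ⟨x, hne⟩) (hb : b ≠ ⟨x, hne⟩) (hne : x ≠ y) :
    d a.1 b.1 := by
  rcases h with h | ⟨h1, -⟩ | ⟨h1, -⟩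
  · exact h
  · exact absurd (Subtype.ext h1) ha
  · exact absurd (Subtype.ext h1) hb
end Ori3

section Ori4
variable {V : Type*} {G : SimpleGraph V} {x y : V}
open Relation

lemma no_cycle_w (hne : x ≠ y) {d : V → V → Prop} (hac : IsAcyclicRel d)
    (np1 : ¬ TransGen d x y) (np2 : ¬ TransGen d y x) :
    ¬ TransGen (barRel x y d) ⟨x, hne⟩ ⟨x, hne⟩ := by
  intro hcyc
  set w : {z : V // z ≠ y} := ⟨x, hne⟩ with hw
  have key : ∀ c : {z : V // z ≠ y}, TransGen (barRel x y d) w c →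
      ∃ b, (b = c.1 ∨ (c.1 = x ∧ b = y)) ∧ ∃ u, (u = x ∨ u = y) ∧ TransGen d u b := by
    intro c hc
    induction hc with
    | single h =>
      obtain ⟨p, q, hpq, hp, hq⟩ := bar_elim h
      refine ⟨q, hq, p, ?_, TransGen.single hpq⟩
      rcases hp with h' | ⟨-, h'⟩
      · exact Or.inl h'
      · exact Or.inr h'
    | tail hab h ih =>
      obtain ⟨p, q, hpq, hp, hq⟩ := bar_elim h
      obtain ⟨b, hb, u, hu, ht⟩ := ih
      by_cases hpb : p = b
      · exact ⟨q, hq, u, hu, ht.tail (hpb ▸ hpq)⟩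
      · obtain ⟨-, hc'⟩ := mem_cls_eq hp hb (fun hh => hpb hh) -- p,b in same class, distinct
        exfalso
        -- u ∈ {x,y}, TransGen d u b, b ∈ {x,y}
        rcases hc' with ⟨-, rfl⟩ | ⟨-, rfl⟩
        · -- b = y
          rcases hu with rfl | rfl
          · exact np1 ht
          · exact hac _ ht
        · -- b = x
          rcases hu with rfl | rfl
          · exact hac _ ht
          · exact np2 ht
  obtain ⟨b, hb, u, hu, ht⟩ := key w hcyc
  have hbxy : b = x ∨ b = y := by
    rcases hb with rfl | ⟨-, rfl⟩
    · exact Or.inl rfl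
    · exact Or.inr rfl
  rcases hu with rfl | rfl <;> rcases hbxy with rfl | rfl
  · exact hac _ ht
  · exact np1 ht
  · exact np2 ht
  · exact hac _ ht

lemma acyc_bar (hne : x ≠ y) {d : V → V → Prop} (hac : IsAcyclicRel d)
    (np1 : ¬ TransGen d x y) (np2 : ¬ TransGen d y x) :
    IsAcyclicRel (barRel x y d) := by
  intro v hcyc
  set w : {z : V // z ≠ y} := ⟨x, hne⟩ with hw
  by_cases hvw : v = w
  · exact no_cycle_w hne hac np1 np2 (by rwa [hvw] at hcyc)
  · have key : ∀ c : {z : V // z ≠ y}, TransGen (barRel x y d) v c →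
        (c ≠ w ∧ TransGen d v.1 c.1) ∨
          (TransGen (barRel x y d) v w ∧ ReflTransGen (barRel x y d) w c) := by
      intro c hc
      induction hc with
      | @single c' h =>
        by_cases hcw : c' = w
        · exact Or.inr ⟨TransGen.single (by rwa [hcw] at h), hcw ▸ ReflTransGen.refl⟩
        · exact Or.inl ⟨hcw, TransGen.single (bar_lift_step h hvw hcw hne)⟩
      | @tail b' c' hab h ih =>
        rcases ih with ⟨hbw, ht⟩ | ⟨h1, h2⟩
        · by_cases hcw : c' = w
          · exact Or.inr ⟨by rw [← hcw]; exact hab.tail h, hcw ▸ ReflTransGen.refl⟩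
          · exact Or.inl ⟨hcw, ht.tail (bar_lift_step h hbw hcw hne)⟩
        · exact Or.inr ⟨h1, h2.tail h⟩
    rcases key v hcyc with ⟨-, ht⟩ | ⟨h1, h2⟩
    · exact hac _ ht
    · rcases reflTransGen_iff_eq_or_transGen.1 h2 with h' | h'
      · exact hvw h'
      · exact no_cycle_w hne hac np1 np2 (h'.trans h1)

lemma ori_lift (hxy : G.Adj x y)
    {o : {z : V // z ≠ y} → {z : V // z ≠ y} → Prop} (ho : IsOrientation (conGraph G x y) o) :
    IsOrientation (G.deleteEdges {s(x,y)}) (liftRel hxy.ne G o) := by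
  constructor
  · exact fun u v h => h.2
  · intro u v hadj
    have hcadj := adj_con hxy hadj
    constructor
    · intro h h'
      exact ori_asymm ho h.1 h'.1
    · intro h
      refine ⟨(ho.2 _ _ hcadj).2 (fun hh => h ⟨hh, hadj.symm⟩), hadj⟩

lemma acyc_lift (hxy : G.Adj x y)
    {o : {z : V // z ≠ y} → {z : V // z ≠ y} → Prop} (ho : IsAcyclicRel o) :
    IsAcyclicRel (liftRel hxy.ne G o) := by
  intro v hv
  exact ho (conProj hxy.ne v) (TransGen.lift (p := o) (conProj hxy.ne) (fun a b h => h.1) _ _ hv)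

lemma np_lift (hxy : G.Adj x y)
    {o : {z : V // z ≠ y} → {z : V // z ≠ y} → Prop} (ho : IsAcyclicRel o) :
    ¬ TransGen (liftRel hxy.ne G o) x y ∧ ¬ TransGen (liftRel hxy.ne G o) y x := by
  constructor
  · intro h
    have : TransGen o (conProj hxy.ne x) (conProj hxy.ne y) :=
      TransGen.lift (p := o) (conProj hxy.ne) (fun a b hh => hh.1) _ _ h
    rw [conProj_x, conProj_y] at this
    exact ho _ this
  · intro h
    have : TransGen o (conProj hxy.ne y) (conProj hxy.ne x) :=
      TransGen.lift (p := o) (conProj hxy.ne) (fun a b hh => hh.1) _ _ h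
    rw [conProj_x, conProj_y] at this
    exact ho _ this

lemma bar_lift (hxy : G.Adj x y)
    {o : {z : V // z ≠ y} → {z : V // z ≠ y} → Prop} (ho : IsOrientation (conGraph G x y) o) :
    barRel x y (liftRel hxy.ne G o) = o := by
  have hne : x ≠ y := hxy.ne
  funext a b
  apply propext
  constructor
  · intro h
    rcases h with ⟨h1, -⟩ | ⟨h1, h2, -⟩ | ⟨h1, h2, -⟩
    · rwa [conProj_val, conProj_val] at h1
    · rw [conProj_y, conProj_val] at h2
      have : a = ⟨x, hne⟩ := Subtype.ext h1
      rwa [this]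
    · rw [conProj_val, conProj_y] at h2
      have : b = ⟨x, hne⟩ := Subtype.ext h1
      rwa [this]
  · intro h
    have hadj := ho.1 a b h
    obtain ⟨hdisj, hab⟩ := hadj
    rcases hdisj with hh | ⟨h1, h2⟩ | ⟨h1, h2⟩
    · refine Or.inl ⟨?_, ?_⟩
      · rwa [conProj_val, conProj_val]
      · exact (adj_del' hxy).2 ⟨hh, fun hp => b.2 hp.2, fun hp => a.2 hp.1⟩
    · refine Or.inr (Or.inl ⟨h1, ?_, ?_⟩)
      · rw [conProj_y, conProj_val]
        have : a = ⟨x, hne⟩ := Subtype.ext h1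
        rwa [← this]
      · refine (adj_del' hxy).2 ⟨h2, fun hp => hne hp.1.symm, fun hp => ?_⟩
        exact hab (Subtype.ext (hp.2.trans h1.symm)).symm
    · refine Or.inr (Or.inr ⟨h1, ?_, ?_⟩)
      · rw [conProj_val, conProj_y]
        have : b = ⟨x, hne⟩ := Subtype.ext h1
        rwa [← this]
      · refine (adj_del' hxy).2 ⟨h2, fun hp => ?_, fun hp => a.2 hp.1⟩
        exact hab (Subtype.ext (hp.1.trans h1.symm))
end Ori4

section Ori5
variable {V : Type*} {G : SimpleGraph V} {x y : V}
open Relation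

lemma acyc_min [Finite V] {r : V → V → Prop} (hac : IsAcyclicRel r) (S : Set V)
    (hS : S.Nonempty) : ∃ s ∈ S, ∀ p ∈ S, ¬ TransGen r p s := by
  haveI : IsTrans V (TransGen r) := ⟨fun a b c hab hbc => hab.trans hbc⟩
  haveI : IsIrrefl V (TransGen r) := ⟨fun a => hac a⟩
  exact (Finite.wellFounded_of_trans_of_irrefl _).has_min S hS

lemma acyc_exists_src [Finite V] [Nonempty V] {r : V → V → Prop} (hac : IsAcyclicRel r) :
    ∃ s, isSrc r s := by
  obtain ⟨s, -, hs⟩ := acyc_min hac Set.univ ⟨Classical.arbitrary V, trivial⟩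
  exact ⟨s, fun p hp => hs p trivial (TransGen.single hp)⟩

lemma exists_other_src {d : V → V → Prop} {v₀ : V}
    (h : ¬(∀ s, isSrc d s ↔ s = v₀)) (hv : isSrc d v₀) : ∃ s, isSrc d s ∧ s ≠ v₀ := by
  push_neg at h
  obtain ⟨s, hs⟩ := h
  rcases hs with ⟨h1, h2⟩ | ⟨h1, h2⟩
  · exact ⟨s, h1, h2⟩
  · exact absurd (h2 ▸ hv) h1

lemma bar_mono (hxy : G.Adj x y) {d₁ d₂ : V → V → Prop}
    (h1 : IsOrientation (G.deleteEdges {s(x,y)}) d₁)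
    (h2 : IsOrientation (G.deleteEdges {s(x,y)}) d₂)
    (hac2 : IsAcyclicRel d₂) (np1 : ¬ TransGen d₂ x y) (np2 : ¬ TransGen d₂ y x)
    (h : barRel x y d₁ = barRel x y d₂) {u v : V} (hd : d₁ u v) : d₂ u v := by
  have hadj := h1.1 u v hd
  by_contra hnd2
  have hd2 : d₂ v u := by
    rcases ori_total h2 hadj with hh | hh
    · exact absurd hh hnd2
    · exact hh
  have b1 := bar_proj hxy h1 hd
  have b2 := bar_proj hxy h2 hd2
  rw [h] at b1
  have hne : conProj hxy.ne u ≠ conProj hxy.ne v := (adj_con hxy hadj).ne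
  exact bar_not_both hxy.ne hac2 np1 np2 hne ⟨b1, b2⟩

lemma r_xy_of_path (hxy : G.Adj x y) {r : V → V → Prop} (hro : IsOrientation G r)
    (hra : IsAcyclicRel r) (hp : TransGen (delRel x y r) x y) : r x y := by
  rcases ori_total hro hxy with h | h
  · exact h
  · exact absurd ((transGen_le (fun u v hh => TransGen.single hh.1) hp).tail h) (hra x)

lemma r_yx_of_path (hxy : G.Adj x y) {r : V → V → Prop} (hro : IsOrientation G r)
    (hra : IsAcyclicRel r) (hp : TransGen (delRel x y r) y x) : r y x := by
  rcases ori_total hro hxy.symm with h | h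
  · exact h
  · exact absurd ((transGen_le (fun u v hh => TransGen.single hh.1) hp).tail h) (hra y)

lemma src_del_cases {r : V → V → Prop} (hro : IsOrientation G r) {v₀ : V}
    (hrs : ∀ s, isSrc r s ↔ s = v₀) (hrxy : r x y) {s : V}
    (h : isSrc (delRel x y r) s) : s = v₀ ∨ s = y := by
  by_cases hs : s = y
  · exact Or.inr hs
  · exact Or.inl ((hrs s).1 (src_of_src_del hro hrxy hs h))

lemma src_del_cases' {r : V → V → Prop} (hro : IsOrientation G r) {v₀ : V}
    (hrs : ∀ s, isSrc r s ↔ s = v₀) (hryx : r y x) {s : V}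
    (h : isSrc (delRel x y r) s) : s = v₀ ∨ s = x := by
  rw [delRel_comm] at h
  by_cases hs : s = x
  · exact Or.inr hs
  · exact Or.inl ((hrs s).1 (src_of_src_del hro hryx hs h))

lemma us_del_of_path (hxy : G.Adj x y) {r : V → V → Prop} (hro : IsOrientation G r)
    (hra : IsAcyclicRel r) {v₀ : V} (hrs : ∀ s, isSrc r s ↔ s = v₀)
    (hpath : TransGen (delRel x y r) x y ∨ TransGen (delRel x y r) y x) :
    ∀ s, isSrc (delRel x y r) s ↔ s = v₀ := by
  intro s
  constructor
  · intro h
    rcases hpath with hp | hp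
    · rcases src_del_cases hro hrs (r_xy_of_path hxy hro hra hp) h with h' | rfl
      · exact h'
      · obtain ⟨c, -, hc⟩ := TransGen.tail'_iff.1 hp
        exact absurd hc (h c)
    · rcases src_del_cases' hro hrs (r_yx_of_path hxy hro hra hp) h with h' | rfl
      · exact h'
      · obtain ⟨c, -, hc⟩ := TransGen.tail'_iff.1 hp
        exact absurd hc (h c)
  · intro hs
    rw [hs]
    exact src_del_of_src ((hrs v₀).2 rfl)
end Ori5

section Ori6
variable {V : Type*} {G : SimpleGraph V} {x y : V}
open Relation

lemma us_bar [Fintype V] (hxy : G.Adj x y) {r : V → V → Prop} (hro : IsOrientation G r)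
    (hra : IsAcyclicRel r) {v₀ : V} (hrs : ∀ s, isSrc r s ↔ s = v₀)
    (np1 : ¬ TransGen (delRel x y r) x y) (np2 : ¬ TransGen (delRel x y r) y x)
    (hcond2 : ¬((∀ s, isSrc (delRel x y r) s ↔ s = v₀) ∧ r x y)) :
    ∀ t, isSrc (barRel x y (delRel x y r)) t ↔ t = conProj hxy.ne v₀ := by
  have hne : x ≠ y := hxy.ne
  set d := delRel x y r with hd_def
  have hd : IsOrientation (G.deleteEdges {s(x,y)}) d := ori_del hxy hro
  have hdac : IsAcyclicRel d := acyc_del hra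
  have hvsrc : isSrc d v₀ := src_del_of_src ((hrs v₀).2 rfl)
  haveI : Nonempty {z : V // z ≠ y} := ⟨⟨x, hne⟩⟩
  have t_ne_w : ∀ t : {z : V // z ≠ y}, t ≠ ⟨x, hne⟩ → t.1 ≠ x :=
    fun t htw h1 => htw (Subtype.ext h1)
  rcases ori_total hro hxy with hrxy | hryx
  · -- r directs the edge x → y
    have hv0y : v₀ ≠ y := fun hh => ((hrs v₀).2 rfl) x (by rw [hh]; exact hrxy)
    have A : ∀ {s}, isSrc d s → s = v₀ ∨ s = y := fun hs => src_del_cases hro hrs hrxy hs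
    by_cases hvx : v₀ = x
    · have hUSfalse : ¬(∀ s, isSrc d s ↔ s = v₀) := fun hUS => hcond2 ⟨hUS, hrxy⟩
      obtain ⟨s₀, hs₀, hs₀ne⟩ := exists_other_src hUSfalse hvsrc
      have hs₀y : s₀ = y := by
        rcases A hs₀ with h | h
        · exact absurd h hs₀ne
        · exact h
      intro t
      constructor
      · intro ht
        by_cases htw : t = ⟨x, hne⟩
        · rw [htw, hvx, conProj_x]
        · exfalso
          rcases A ((src_bar_iff hxy hd (t_ne_w t htw)).1 ht) with h | h
          · exact (t_ne_w t htw) (h.trans hvx)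
          · exact t.2 h
      · intro ht
        rw [ht, hvx, conProj_x]
        exact (src_bar_w hxy hd).2 ⟨hvx ▸ hvsrc, hs₀y ▸ hs₀⟩
    · intro t
      constructor
      · intro ht
        by_cases htw : t = ⟨x, hne⟩
        · exfalso
          obtain ⟨hx, -⟩ := (src_bar_w hxy hd).1 (htw ▸ ht)
          rcases A hx with h | h
          · exact hvx h.symm
          · exact hne h
        · rcases A ((src_bar_iff hxy hd (t_ne_w t htw)).1 ht) with h | h
          · rw [conProj_of_ne hne hv0y]
            exact Subtype.ext h
          · exact absurd h t.2
      · intro ht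
        rw [ht, conProj_of_ne hne hv0y]
        exact (src_bar_iff hxy hd hvx).2 hvsrc
  · -- r directs the edge y → x
    have hv0x : v₀ ≠ x := fun hh => ((hrs v₀).2 rfl) y (by rw [hh]; exact hryx)
    have A : ∀ {s}, isSrc d s → s = v₀ ∨ s = x := fun hs => src_del_cases' hro hrs hryx hs
    by_cases hvy : v₀ = y
    · have hxsrc : isSrc d x := by
        by_contra hx
        obtain ⟨t, ht⟩ := acyc_exists_src (acyc_bar hne hdac np1 np2)
        by_cases htw : t = ⟨x, hne⟩
        · exact hx ((src_bar_w hxy hd).1 (htw ▸ ht)).1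
        · rcases A ((src_bar_iff hxy hd (t_ne_w t htw)).1 ht) with h | h
          · exact t.2 (h.trans hvy)
          · exact (t_ne_w t htw) h
      intro t
      constructor
      · intro ht
        rw [hvy, conProj_y]
        by_cases htw : t = ⟨x, hne⟩
        · exact htw
        · exfalso
          rcases A ((src_bar_iff hxy hd (t_ne_w t htw)).1 ht) with h | h
          · exact t.2 (h.trans hvy)
          · exact (t_ne_w t htw) h
      · intro ht
        rw [ht, hvy, conProj_y]
        exact (src_bar_w hxy hd).2 ⟨hxsrc, hvy ▸ hvsrc⟩
    · intro t
      constructor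
      · intro ht
        by_cases htw : t = ⟨x, hne⟩
        · exfalso
          obtain ⟨-, hy⟩ := (src_bar_w hxy hd).1 (htw ▸ ht)
          rcases A hy with h | h
          · exact hvy h.symm
          · exact hne h.symm
        · rcases A ((src_bar_iff hxy hd (t_ne_w t htw)).1 ht) with h | h
          · rw [conProj_of_ne hne hvy]
            exact Subtype.ext h
          · exact absurd h (t_ne_w t htw)
      · intro ht
        rw [ht, conProj_of_ne hne hvy]
        exact (src_bar_iff hxy hd hv0x).2 hvsrc
end Ori6

section Ori7
variable {V : Type*} {G : SimpleGraph V} {x y : V}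
open Relation

lemma us_ins {d : V → V → Prop} {v₀ : V} (hdus : ∀ s, isSrc d s ↔ s = v₀)
    (hv0y : v₀ ≠ y) : ∀ s, isSrc (insRel x y d) s ↔ s = v₀ := by
  intro s
  by_cases hs : s = y
  · rw [hs]
    exact iff_of_false not_src_ins_y (fun hh => hv0y hh.symm)
  · exact (src_ins_iff hs).trans (hdus s)

lemma v0_ne_y_of_us [Fintype V] (hxy : G.Adj x y) {d : V → V → Prop}
    (hdo : IsOrientation (G.deleteEdges {s(x,y)}) d) (hdac : IsAcyclicRel d) {v₀ : V}
    (hdus : ∀ s, isSrc d s ↔ s = v₀)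
    (np1 : ¬ TransGen d x y) (np2 : ¬ TransGen d y x) : v₀ ≠ y := by
  have hne := hxy.ne
  intro hh
  haveI : Nonempty {z : V // z ≠ y} := ⟨⟨x, hne⟩⟩
  obtain ⟨t, ht⟩ := acyc_exists_src (acyc_bar hne hdac np1 np2)
  by_cases htw : t = ⟨x, hne⟩
  · exact hne ((((hdus x).1 ((src_bar_w hxy hdo).1 (htw ▸ ht)).1)).trans hh)
  · have h1 := (src_bar_iff hxy hdo (fun h1 => htw (Subtype.ext h1))).1 ht
    exact t.2 (((hdus t.1).1 h1).trans hh)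

lemma v0_ne_x_of_us [Fintype V] (hxy : G.Adj x y) {d : V → V → Prop}
    (hdo : IsOrientation (G.deleteEdges {s(x,y)}) d) (hdac : IsAcyclicRel d) {v₀ : V}
    (hdus : ∀ s, isSrc d s ↔ s = v₀)
    (np1 : ¬ TransGen d x y) (np2 : ¬ TransGen d y x) : v₀ ≠ x := by
  have hne := hxy.ne
  intro hh
  haveI : Nonempty {z : V // z ≠ y} := ⟨⟨x, hne⟩⟩
  obtain ⟨t, ht⟩ := acyc_exists_src (acyc_bar hne hdac np1 np2)
  by_cases htw : t = ⟨x, hne⟩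
  · exact hne (((hdus y).1 ((src_bar_w hxy hdo).1 (htw ▸ ht)).2).trans hh).symm
  · have h1 := (src_bar_iff hxy hdo (fun h1 => htw (Subtype.ext h1))).1 ht
    exact (fun h1 => htw (Subtype.ext h1)) (((hdus t.1).1 h1).trans hh)

lemma conProj_eq_w {v₀ : V} (hne : x ≠ y) (h : conProj hne v₀ = ⟨x, hne⟩) :
    v₀ = x ∨ v₀ = y := by
  by_cases hvy : v₀ = y
  · exact Or.inr hvy
  · rw [conProj_of_ne hne hvy] at h
    exact Or.inl (congrArg Subtype.val h)

lemma src_of_us_bar (hxy : G.Adj x y) {d : V → V → Prop}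
    (hdo : IsOrientation (G.deleteEdges {s(x,y)}) d) {v₀ : V}
    (hdus' : ∀ t, isSrc (barRel x y d) t ↔ t = conProj hxy.ne v₀) : isSrc d v₀ := by
  have hne := hxy.ne
  by_cases hvy : v₀ = y
  · have hw : isSrc (barRel x y d) ⟨x, hne⟩ := (hdus' _).2 (by rw [hvy, conProj_y])
    have := ((src_bar_w hxy hdo).1 hw).2
    rwa [← hvy] at this
  · by_cases hvx : v₀ = x
    · have hw : isSrc (barRel x y d) ⟨x, hne⟩ := (hdus' _).2 (by rw [hvx, conProj_x])
      have := ((src_bar_w hxy hdo).1 hw).1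
      rwa [← hvx] at this
    · have ht : isSrc (barRel x y d) ⟨v₀, hvy⟩ :=
        (hdus' _).2 (by rw [conProj_of_ne hne hvy])
      exact (src_bar_iff hxy hdo hvx).1 ht

lemma us_ins_of_bar (hxy : G.Adj x y) {d : V → V → Prop}
    (hdo : IsOrientation (G.deleteEdges {s(x,y)}) d) {v₀ : V}
    (hdus' : ∀ t, isSrc (barRel x y d) t ↔ t = conProj hxy.ne v₀)
    (hvsrc : isSrc d v₀) (hysrc : isSrc d y) (hv0y : v₀ ≠ y) :
    ∀ s, isSrc (insRel x y d) s ↔ s = v₀ := by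
  have hne := hxy.ne
  intro s
  by_cases hs : s = y
  · rw [hs]
    exact iff_of_false not_src_ins_y (fun hh => hv0y hh.symm)
  · rw [src_ins_iff hs]
    constructor
    · intro hsrc
      by_cases hsx : s = x
      · have hw : isSrc (barRel x y d) ⟨x, hne⟩ :=
          (src_bar_w hxy hdo).2 ⟨hsx ▸ hsrc, hysrc⟩
        rcases conProj_eq_w hne ((hdus' _).1 hw).symm with hvx | hvy'
        · exact hsx.trans hvx.symm
        · exact absurd hvy' hv0y
      · have ht : isSrc (barRel x y d) ⟨s, hs⟩ := (src_bar_iff hxy hdo hsx).2 hsrc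
        have h2 := congrArg Subtype.val ((hdus' _).1 ht)
        rwa [conProj_of_ne hne hv0y] at h2
    · intro hh; rw [hh]; exact hvsrc

lemma us_ins_of_bar' (hxy : G.Adj x y) {d : V → V → Prop}
    (hdo : IsOrientation (G.deleteEdges {s(x,y)}) d) {v₀ : V}
    (hdus' : ∀ t, isSrc (barRel x y d) t ↔ t = conProj hxy.ne v₀)
    (hvsrc : isSrc d v₀) (hxsrc : isSrc d x) (hv0x : v₀ ≠ x) :
    ∀ s, isSrc (insRel y x d) s ↔ s = v₀ := by
  have hne := hxy.ne
  intro s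
  by_cases hs : s = x
  · rw [hs]
    exact iff_of_false not_src_ins_y (fun hh => hv0x hh.symm)
  · rw [src_ins_iff hs]
    constructor
    · intro hsrc
      by_cases hsy : s = y
      · have hw : isSrc (barRel x y d) ⟨x, hne⟩ :=
          (src_bar_w hxy hdo).2 ⟨hxsrc, hsy ▸ hsrc⟩
        rcases conProj_eq_w hne ((hdus' _).1 hw).symm with hvx | hvy'
        · exact absurd hvx hv0x
        · exact hsy.trans hvy'.symm
      · have ht : isSrc (barRel x y d) ⟨s, hsy⟩ := (src_bar_iff hxy hdo hs).2 hsrc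
        have h2 := congrArg Subtype.val ((hdus' _).1 ht)
        by_cases hvy : v₀ = y
        · rw [hvy, conProj_y] at h2
          exact absurd h2 hs
        · rwa [conProj_of_ne hne hvy] at h2
    · intro hh; rw [hh]; exact hvsrc

lemma ins_dir_eq (hxy : G.Adj x y) {r₁ r₂ : V → V → Prop} {v₀ : V}
    (h1o : IsOrientation G r₁) (h2o : IsOrientation G r₂)
    (h1s : ∀ s, isSrc r₁ s ↔ s = v₀) (h2s : ∀ s, isSrc r₂ s ↔ s = v₀)
    (hdel : delRel x y r₁ = delRel x y r₂)
    (hUSn : ¬(∀ s, isSrc (delRel x y r₁) s ↔ s = v₀)) (hr1 : r₁ x y) : r₂ x y := by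
  by_contra hr2n
  have hr2 : r₂ y x := by
    rcases ori_total h2o hxy with h | h
    · exact absurd h hr2n
    · exact h
  have hvsrc : isSrc (delRel x y r₁) v₀ := src_del_of_src ((h1s v₀).2 rfl)
  obtain ⟨s₀, hs₀, hne₀⟩ := exists_other_src hUSn hvsrc
  have e1 : s₀ = y := by
    rcases src_del_cases h1o h1s hr1 hs₀ with h | h
    · exact absurd h hne₀
    · exact h
  have e2 : s₀ = x := by
    rcases src_del_cases' h2o h2s hr2 (hdel ▸ hs₀) with h | h
    · exact absurd h hne₀
    · exact h
  exact hxy.ne (e2.symm.trans e1)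
end Ori7

section Main
open Relation
open scoped Classical
variable {V : Type*} {G : SimpleGraph V} {x y : V}

abbrev OriSub (G : SimpleGraph V) (v₀ : V) :=
  {r : V → V → Prop // IsOrientation G r ∧ IsAcyclicRel r ∧ ∀ s, isSrc r s ↔ s = v₀}

noncomputable def phi [Fintype V] (hxy : G.Adj x y) (v₀ : V) (rr : OriSub G v₀) :
    OriSub (G.deleteEdges {s(x,y)}) v₀ ⊕ OriSub (conGraph G x y) (conProj hxy.ne v₀) :=
  if hc : (TransGen (delRel x y rr.1) x y ∨ TransGen (delRel x y rr.1) y x) ∨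
      ((∀ s, isSrc (delRel x y rr.1) s ↔ s = v₀) ∧ rr.1 x y) then
    Sum.inl ⟨delRel x y rr.1, ori_del hxy rr.2.1, acyc_del rr.2.2.1,
      hc.elim (us_del_of_path hxy rr.2.1 rr.2.2.1 rr.2.2.2) And.left⟩
  else
    Sum.inr ⟨barRel x y (delRel x y rr.1),
      ori_bar hxy (ori_del hxy rr.2.1) (acyc_del rr.2.2.1)
        (fun h => hc (Or.inl (Or.inl h))) (fun h => hc (Or.inl (Or.inr h))),
      acyc_bar hxy.ne (acyc_del rr.2.2.1)
        (fun h => hc (Or.inl (Or.inl h))) (fun h => hc (Or.inl (Or.inr h))),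
      us_bar hxy rr.2.1 rr.2.2.1 rr.2.2.2
        (fun h => hc (Or.inl (Or.inl h))) (fun h => hc (Or.inl (Or.inr h)))
        (fun h => hc (Or.inr h))⟩

lemma phi_inj [Fintype V] (hxy : G.Adj x y) (v₀ : V) :
    Function.Injective (phi hxy v₀) := by
  intro r₁ r₂ h
  unfold phi at h
  by_cases h1 : (TransGen (delRel x y r₁.1) x y ∨ TransGen (delRel x y r₁.1) y x) ∨
      ((∀ s, isSrc (delRel x y r₁.1) s ↔ s = v₀) ∧ r₁.1 x y) <;>
    by_cases h2 : (TransGen (delRel x y r₂.1) x y ∨ TransGen (delRel x y r₂.1) y x) ∨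
      ((∀ s, isSrc (delRel x y r₂.1) s ↔ s = v₀) ∧ r₂.1 x y)
  · rw [dif_pos h1, dif_pos h2] at h
    have hdel : delRel x y r₁.1 = delRel x y r₂.1 :=
      congrArg Subtype.val (Sum.inl.inj h)
    rw [← hdel] at h2
    have hiff : r₁.1 x y ↔ r₂.1 x y := by
      by_cases hp1 : TransGen (delRel x y r₁.1) x y
      · exact iff_of_true (r_xy_of_path hxy r₁.2.1 r₁.2.2.1 hp1)
          (r_xy_of_path hxy r₂.2.1 r₂.2.2.1 (hdel ▸ hp1))
      · by_cases hp2 : TransGen (delRel x y r₁.1) y x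
        · exact iff_of_false
            (ori_asymm r₁.2.1 (r_yx_of_path hxy r₁.2.1 r₁.2.2.1 hp2))
            (ori_asymm r₂.2.1 (r_yx_of_path hxy r₂.2.1 r₂.2.2.1 (hdel ▸ hp2)))
        · have c1 : r₁.1 x y := (h1.resolve_left (fun hp => hp.elim hp1 hp2)).2
          have c2 : r₂.1 x y := (h2.resolve_left (fun hp => hp.elim hp1 hp2)).2
          exact iff_of_true c1 c2
    exact Subtype.ext (ori_ext_unique hxy r₁.2.1 r₂.2.1 hdel hiff)
  · rw [dif_pos h1, dif_neg h2] at h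
    exact absurd h (by simp)
  · rw [dif_neg h1, dif_pos h2] at h
    exact absurd h (by simp)
  · rw [dif_neg h1, dif_neg h2] at h
    have hbar : barRel x y (delRel x y r₁.1) = barRel x y (delRel x y r₂.1) :=
      congrArg Subtype.val (Sum.inr.inj h)
    have np1a : ¬ TransGen (delRel x y r₁.1) x y := fun hh => h1 (Or.inl (Or.inl hh))
    have np1b : ¬ TransGen (delRel x y r₁.1) y x := fun hh => h1 (Or.inl (Or.inr hh))
    have np2a : ¬ TransGen (delRel x y r₂.1) x y := fun hh => h2 (Or.inl (Or.inl hh))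
    have np2b : ¬ TransGen (delRel x y r₂.1) y x := fun hh => h2 (Or.inl (Or.inr hh))
    have hdel : delRel x y r₁.1 = delRel x y r₂.1 := by
      funext u v
      apply propext
      exact ⟨fun hh => bar_mono hxy (ori_del hxy r₁.2.1) (ori_del hxy r₂.2.1)
          (acyc_del r₂.2.2.1) np2a np2b hbar hh,
        fun hh => bar_mono hxy (ori_del hxy r₂.2.1) (ori_del hxy r₁.2.1)
          (acyc_del r₁.2.2.1) np1a np1b hbar.symm hh⟩
    have hiff : r₁.1 x y ↔ r₂.1 x y := by
      by_cases hUS : ∀ s, isSrc (delRel x y r₁.1) s ↔ s = v₀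
      · exact iff_of_false (fun hh => h1 (Or.inr ⟨hUS, hh⟩))
          (fun hh => h2 (Or.inr ⟨hdel ▸ hUS, hh⟩))
      · constructor
        · exact ins_dir_eq hxy r₁.2.1 r₂.2.1 r₁.2.2.2 r₂.2.2.2 hdel hUS
        · exact ins_dir_eq hxy r₂.2.1 r₁.2.1 r₂.2.2.2 r₁.2.2.2 hdel.symm
            (fun hh => hUS (hdel ▸ hh))
    exact Subtype.ext (ori_ext_unique hxy r₁.2.1 r₂.2.1 hdel hiff)

lemma phi_surj [Fintype V] (hxy : G.Adj x y) (v₀ : V) :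
    Function.Surjective (phi hxy v₀) := by
  rintro (⟨d, hdo, hdac, hdus⟩ | ⟨o, hoo, hoac, hous⟩)
  · by_cases hp1 : TransGen d x y
    · have np2 : ¬ TransGen d y x := fun hh => hdac x (hp1.trans hh)
      have hv0y : v₀ ≠ y := by
        intro hh
        obtain ⟨c, -, hc⟩ := TransGen.tail'_iff.1 hp1
        exact ((hdus y).2 hh.symm) c hc
      have hdel : delRel x y (insRel x y d) = d := del_ins hxy hdo
      refine ⟨⟨insRel x y d, ori_ins hxy hdo, acyc_ins hxy.ne hdac np2,
        us_ins hdus hv0y⟩, ?_⟩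
      unfold phi
      split
      · exact congrArg Sum.inl (Subtype.ext hdel)
      · next hc =>
          exfalso; exact hc (by rw [hdel]; exact Or.inl (Or.inl hp1))
    · by_cases hp2 : TransGen d y x
      · have hv0x : v₀ ≠ x := by
          intro hh
          obtain ⟨c, -, hc⟩ := TransGen.tail'_iff.1 hp2
          exact ((hdus x).2 hh.symm) c hc
        have hdo' : IsOrientation (G.deleteEdges {s(y,x)}) d :=
          deleteEdges_comm' G x y ▸ hdo
        have hdel : delRel x y (insRel y x d) = d := by
          rw [delRel_comm]; exact del_ins hxy.symm hdo'
        refine ⟨⟨insRel y x d, ori_ins hxy.symm hdo', acyc_ins hxy.ne.symm hdac hp1,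
          us_ins hdus hv0x⟩, ?_⟩
        unfold phi
        split
        · exact congrArg Sum.inl (Subtype.ext hdel)
        · next hc =>
            exfalso; exact hc (by rw [hdel]; exact Or.inl (Or.inr hp2))
      · have hv0y : v₀ ≠ y := v0_ne_y_of_us hxy hdo hdac hdus hp1 hp2
        have hdel : delRel x y (insRel x y d) = d := del_ins hxy hdo
        refine ⟨⟨insRel x y d, ori_ins hxy hdo, acyc_ins hxy.ne hdac hp2,
          us_ins hdus hv0y⟩, ?_⟩
        unfold phi
        split
        · exact congrArg Sum.inl (Subtype.ext hdel)
        · next hc =>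
            exfalso
            exact hc (by rw [hdel]; exact Or.inr ⟨hdus, Or.inr ⟨rfl, rfl⟩⟩)
  · set d := liftRel hxy.ne G o with hd_def
    have hdo : IsOrientation (G.deleteEdges {s(x,y)}) d := ori_lift hxy hoo
    have hdac : IsAcyclicRel d := acyc_lift hxy hoac
    have np := np_lift hxy hoac
    have hbar : barRel x y d = o := bar_lift hxy hoo
    have hdus' : ∀ t, isSrc (barRel x y d) t ↔ t = conProj hxy.ne v₀ := by
      rw [hbar]; exact hous
    have hvsrc : isSrc d v₀ := src_of_us_bar hxy hdo hdus'
    by_cases hUS : ∀ s, isSrc d s ↔ s = v₀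
    · have hv0x : v₀ ≠ x := v0_ne_x_of_us hxy hdo hdac hUS np.1 np.2
      have hdo' : IsOrientation (G.deleteEdges {s(y,x)}) d :=
        deleteEdges_comm' G x y ▸ hdo
      have hdel : delRel x y (insRel y x d) = d := by
        rw [delRel_comm]; exact del_ins hxy.symm hdo'
      refine ⟨⟨insRel y x d, ori_ins hxy.symm hdo', acyc_ins hxy.ne.symm hdac np.1,
        us_ins hUS hv0x⟩, ?_⟩
      unfold phi
      split
      · next hc =>
          exfalso
          rw [hdel] at hc
          rcases hc with (hh | hh) | ⟨-, hh | hh⟩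
          · exact np.1 hh
          · exact np.2 hh
          · exact (del_no_e hxy hdo).1 hh
          · exact hxy.ne hh.1
      · exact congrArg Sum.inr (Subtype.ext
          (show barRel x y (delRel x y (insRel y x d)) = o by rw [hdel, hbar]))
    · obtain ⟨s₀, hs₀, hs₀ne⟩ := exists_other_src hUS hvsrc
      have hs₀xy : s₀ = x ∨ s₀ = y := by
        by_contra hcc
        push_neg at hcc
        have ht : isSrc (barRel x y d) ⟨s₀, hcc.2⟩ := (src_bar_iff hxy hdo hcc.1).2 hs₀
        have h2 := congrArg Subtype.val ((hdus' _).1 ht)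
        by_cases hvy : v₀ = y
        · rw [hvy, conProj_y] at h2; exact hcc.1 h2
        · rw [conProj_of_ne hxy.ne hvy] at h2; exact hs₀ne h2
      rcases hs₀xy with hs | hs
      · have hdo' : IsOrientation (G.deleteEdges {s(y,x)}) d :=
          deleteEdges_comm' G x y ▸ hdo
        have hdel : delRel x y (insRel y x d) = d := by
          rw [delRel_comm]; exact del_ins hxy.symm hdo'
        refine ⟨⟨insRel y x d, ori_ins hxy.symm hdo', acyc_ins hxy.ne.symm hdac np.1,
          us_ins_of_bar' hxy hdo hdus' hvsrc (hs ▸ hs₀)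
            (fun hh => hs₀ne (hs.trans hh.symm))⟩, ?_⟩
        unfold phi
        split
        · next hc =>
            exfalso
            rw [hdel] at hc
            rcases hc with (hh | hh) | ⟨hU, -⟩
            · exact np.1 hh
            · exact np.2 hh
            · exact hUS hU
        · exact congrArg Sum.inr (Subtype.ext
            (show barRel x y (delRel x y (insRel y x d)) = o by rw [hdel, hbar]))
      · have hdel : delRel x y (insRel x y d) = d := del_ins hxy hdo
        refine ⟨⟨insRel x y d, ori_ins hxy hdo, acyc_ins hxy.ne hdac np.2,
          us_ins_of_bar hxy hdo hdus' hvsrc (hs ▸ hs₀)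
            (fun hh => hs₀ne (hs.trans hh.symm))⟩, ?_⟩
        unfold phi
        split
        · next hc =>
            exfalso
            rw [hdel] at hc
            rcases hc with (hh | hh) | ⟨hU, -⟩
            · exact np.1 hh
            · exact np.2 hh
            · exact hUS hU
        · exact congrArg Sum.inr (Subtype.ext
            (show barRel x y (delRel x y (insRel x y d)) = o by rw [hdel, hbar]))

lemma card_ori_rec [Fintype V] (hxy : G.Adj x y) (v₀ : V) :
    Nat.card (OriSub G v₀) = Nat.card (OriSub (G.deleteEdges {s(x,y)}) v₀)
      + Nat.card (OriSub (conGraph G x y) (conProj hxy.ne v₀)) := by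
  rw [← Nat.card_sum]
  exact Nat.card_congr (Equiv.ofBijective _ ⟨phi_inj hxy v₀, phi_surj hxy v₀⟩)
end Main

section Base
open Relation
variable {V : Type*} {G : SimpleGraph V}

lemma card_orisub_bot_one [Fintype V] (v₀ : V) (h1 : Fintype.card V = 1) :
    Nat.card (OriSub (⊥ : SimpleGraph V) v₀) = 1 := by
  haveI : Subsingleton V := Fintype.card_le_one_iff_subsingleton.1 (le_of_eq h1)
  rw [Nat.card_eq_one_iff_unique]
  constructor
  · constructor
    rintro ⟨r1, h1o, -, -⟩ ⟨r2, h2o, -, -⟩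
    apply Subtype.ext
    funext u v
    exact propext (iff_of_false (fun hh => h1o.1 u v hh) (fun hh => h2o.1 u v hh))
  · refine ⟨⟨fun _ _ => False, ⟨fun u v h => h.elim, fun u v h => h.elim⟩, ?_, ?_⟩⟩
    · intro v h
      cases h with
      | single h => exact h
      | tail _ h => exact h
    · intro s
      exact iff_of_true (fun u h => h) (Subsingleton.elim s v₀)

lemma card_orisub_bot_two [Fintype V] (v₀ : V) (h2 : 2 ≤ Fintype.card V) :
    Nat.card (OriSub (⊥ : SimpleGraph V) v₀) = 0 := by
  haveI : IsEmpty (OriSub (⊥ : SimpleGraph V) v₀) := by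
    constructor
    rintro ⟨r, hro, -, hrs⟩
    obtain ⟨s, hs⟩ := Fintype.exists_ne_of_one_lt_card (by omega) v₀
    exact hs ((hrs s).1 (fun u hu => hro.1 u s hu))
  exact Nat.card_of_isEmpty

lemma card_orisub_disconn [Fintype V] (h : ¬ G.Connected) (v₀ : V) :
    Nat.card (OriSub G v₀) = 0 := by
  haveI : IsEmpty (OriSub G v₀) := by
    constructor
    rintro ⟨r, hro, hra, hrs⟩
    have hpre : ¬ G.Preconnected := by
      intro hp
      exact h ((SimpleGraph.connected_iff G).2 ⟨hp, ⟨v₀⟩⟩)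
    have hu : ∃ u, ¬ G.Reachable v₀ u := by
      by_contra hh
      push_neg at hh
      exact hpre (fun a b => (hh a).symm.trans (hh b))
    obtain ⟨u, hu⟩ := hu
    obtain ⟨s, hsmem, hsmin⟩ := acyc_min hra {z | G.Reachable u z} ⟨u, Reachable.refl u⟩
    have hsrc : isSrc r s := by
      intro p hp
      have hps : G.Adj p s := hro.1 p s hp
      exact hsmin p (hsmem.trans hps.symm.reachable) (TransGen.single hp)
    exact hu (((hrs s).1 hsrc ▸ hsmem).symm)
  exact Nat.card_of_isEmpty
end Base


section Key
open Relation

lemma key_lemma : ∀ (n : ℕ) (V : Type u) [Fintype V] (G : SimpleGraph V),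
    Fintype.card V ≤ n → ∀ P : Polynomial ℤ, IsChromaticPoly G P → ∀ v₀ : V,
    (-1 : ℤ) ^ (Fintype.card V - 1) * P.coeff 1 = Nat.card (OriSub G v₀) := by
  intro n
  induction n with
  | zero =>
    intro V _ G hc P hP v₀
    haveI : IsEmpty V := Fintype.card_eq_zero_iff.1 (Nat.le_zero.1 hc)
    exact isEmptyElim v₀
  | succ n ihn =>
    suffices h : ∀ (m : ℕ) (V : Type u) [Fintype V] (G : SimpleGraph V),
        Fintype.card V ≤ n + 1 → Nat.card G.edgeSet ≤ m →
        ∀ P : Polynomial ℤ, IsChromaticPoly G P → ∀ v₀ : V,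
        (-1 : ℤ) ^ (Fintype.card V - 1) * P.coeff 1 = Nat.card (OriSub G v₀) by
      intro V _ G hc
      exact h (Nat.card G.edgeSet) V G hc le_rfl
    have base : ∀ (V : Type u) [Fintype V] (G : SimpleGraph V), G = ⊥ →
        ∀ P : Polynomial ℤ, IsChromaticPoly G P → ∀ v₀ : V,
        (-1 : ℤ) ^ (Fintype.card V - 1) * P.coeff 1 = Nat.card (OriSub G v₀) := by
      intro V _ G hG P hP v₀
      subst hG
      have hPX : P = X ^ Fintype.card V :=
        chromPoly_unique hP (chromPoly_bot V)
      rw [hPX, Polynomial.coeff_X_pow]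
      have hpos : 1 ≤ Fintype.card V := Fintype.card_pos_iff.2 ⟨v₀⟩
      by_cases h1 : Fintype.card V = 1
      · rw [card_orisub_bot_one v₀ h1, h1]
        norm_num
      · have h2 : 2 ≤ Fintype.card V := by omega
        rw [card_orisub_bot_two v₀ h2, if_neg (by omega)]
        norm_num
    intro m
    induction m with
    | zero =>
      intro V _ G hc hm P hP v₀
      exact base V G (bot_of_no_edges (Nat.le_zero.1 hm)) P hP v₀
    | succ m ihm =>
      intro V _ G hc hm P hP v₀
      by_cases hb : Nat.card G.edgeSet = 0
      · exact base V G (bot_of_no_edges hb) P hP v₀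
      · have hnem : G.edgeSet.Nonempty := by
          rw [Set.nonempty_iff_ne_empty]
          intro hh
          exact hb (by rw [Nat.card_coe_set_eq, hh, Set.ncard_empty])
        obtain ⟨e, he⟩ := hnem
        obtain ⟨x, y, rfl⟩ := Sym2.exists.1 ⟨e, rfl⟩
        have hxy : G.Adj x y := G.mem_edgeSet.1 he
        have hdel : Nat.card (G.deleteEdges {s(x,y)}).edgeSet ≤ m :=
          Nat.lt_succ_iff.1 (lt_of_lt_of_le (card_del_lt hxy) hm)
        obtain ⟨Pd, hPd⟩ := chromPoly_exists' (n+1) V (G.deleteEdges {s(x,y)}) hc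
        haveI : Fintype {z : V // z ≠ y} := Fintype.ofFinite _
        have hcard' : Fintype.card {z : V // z ≠ y} = Fintype.card V - 1 := by
          rw [← Nat.card_eq_fintype_card, card_con]
        have hk2 : 2 ≤ Fintype.card V := by
          by_contra hh
          haveI : Subsingleton V := Fintype.card_le_one_iff_subsingleton.1 (by omega)
          exact hxy.ne (Subsingleton.elim x y)
        have hcc : Fintype.card {z : V // z ≠ y} ≤ n := by omega
        obtain ⟨Pc, hPc⟩ := chromPoly_exists' n {z : V // z ≠ y} (conGraph G x y) hcc
        have hPeq : P = Pd - Pc := by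
          apply chromPoly_unique hP
          intro k
          rw [eval_sub, hPd k, hPc k, count_del hxy k]
          push_cast; ring
        have ih1 := ihm V (G.deleteEdges {s(x,y)}) hc hdel Pd hPd v₀
        have ih2 := ihn {z : V // z ≠ y} (conGraph G x y) (by omega) Pc hPc
          (conProj hxy.ne v₀)
        rw [card_ori_rec hxy v₀, hPeq, Polynomial.coeff_sub]
        rw [hcard'] at ih2
        have e2 : Fintype.card V - 1 - 1 = Fintype.card V - 2 := by omega
        rw [e2] at ih2
        push_cast
        rw [← ih1, ← ih2]
        have hsign : (-1 : ℤ) ^ (Fintype.card V - 1) =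
            -(-1 : ℤ) ^ (Fintype.card V - 2) := by
          conv_lhs => rw [show Fintype.card V - 1 = (Fintype.card V - 2) + 1 by omega]
          rw [pow_succ]
          ring
        rw [hsign]
        ring
end Key
end GZProof

/-- Greene–Zaslavsky: up to the sign `(-1)^{|V|-1}`, the linear coefficient of `χ_G`
counts acyclic orientations whose unique source is a fixed chosen vertex; it vanishes for
disconnected graphs with at least two vertices and equals `1` for a one-vertex graph. -/
theorem linear_coeff_chromatic {V : Type*} [Fintype V] (G : SimpleGraph V)
    (P : Polynomial ℤ) (hP : IsChromaticPoly G P) :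
    (∀ v₀ : V, (-1 : ℤ) ^ (Fintype.card V - 1) * P.coeff 1 =
      Nat.card {r : V → V → Prop // IsOrientation G r ∧ IsAcyclicRel r ∧
        ∀ s, (∀ u, ¬ r u s) ↔ s = v₀}) ∧
    (¬ G.Connected → 2 ≤ Fintype.card V → P.coeff 1 = 0) ∧
    (Fintype.card V = 1 → P.coeff 1 = 1) := by
  classical
  refine ⟨?_, ?_, ?_⟩
  · intro v₀
    exact key_lemma (Fintype.card V) V G le_rfl P hP v₀
  · intro hconn hcard
    haveI : Nonempty V := Fintype.card_pos_iff.1 (by omega)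
    obtain ⟨v₀⟩ := ‹Nonempty V›
    have h := key_lemma (Fintype.card V) V G le_rfl P hP v₀
    rw [card_orisub_disconn hconn v₀] at h
    have h' : (-1:ℤ)^(Fintype.card V - 1) * P.coeff 1 = 0 := by exact_mod_cast h
    rcases mul_eq_zero.1 h' with hh | hh
    · exact absurd hh (pow_ne_zero _ (by norm_num))
    · exact hh
  · intro h1
    haveI : Nonempty V := Fintype.card_pos_iff.1 (by omega)
    obtain ⟨v₀⟩ := ‹Nonempty V›
    have hG : G = ⊥ := by
      haveI : Subsingleton V := Fintype.card_le_one_iff_subsingleton.1 (le_of_eq h1)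
      ext u v
      exact iff_of_false (fun h => h.ne (Subsingleton.elim u v)) (fun h => h.elim)
    have h := key_lemma (Fintype.card V) V G le_rfl P hP v₀
    rw [hG, card_orisub_bot_one v₀ h1, h1] at h
    simpa using h
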